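/- For any $K > 1$ and any positive integer $k$, and any real $x \geq 2$: $\sum_{n \leq x} K^{\omega(n)} \gcd(n,k)^{1/2} \ll_K x (\log x)^{K-1} \sum_{h \mid k} h^{-1/2} K^{\omega(h)}$. -/

import Mathlib

open Finset



-- divisor swap
lemma swap_div (N : ℕ) (g : ℕ → ℝ) :
    ∑ m ∈ Icc 1 N, ∑ d ∈ m.divisors, g d = ∑ d ∈ Icc 1 N, g d * ((N / d : ℕ) : ℝ) := by
  rw [Finset.sum_comm' (t' := Icc 1 N) (s' := fun d => (Icc 1 N).filter (d ∣ ·))]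
  · refine Finset.sum_congr rfl fun d hd => ?_
    have : Icc 1 N = Ioc 0 N := by ext m; simp [Nat.lt_iff_add_one_le]
    rw [Finset.sum_const, nsmul_eq_mul, mul_comm, this, Nat.Ioc_filter_dvd_card_eq_div]
  · intro m d
    simp only [Finset.mem_Icc, Nat.mem_divisors, Finset.mem_filter]
    constructor
    · rintro ⟨⟨hm1, hmN⟩, hdm, -⟩
      have hd0 : 0 < d := Nat.pos_of_dvd_of_pos hdm hm1
      exact ⟨⟨⟨hm1, hmN⟩, hdm⟩, hd0, le_trans (Nat.le_of_dvd hm1 hdm) hmN⟩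
    · rintro ⟨⟨⟨hm1, hmN⟩, hdm⟩, -⟩
      exact ⟨⟨hm1, hmN⟩, hdm, by omega⟩

-- squarefree product of distinct primes
lemma squarefree_prod_primes {S : Finset ℕ} (hS : ∀ p ∈ S, p.Prime) :
    Squarefree (∏ p ∈ S, p) := by
  induction S using Finset.cons_induction with
  | empty => simpa using squarefree_one
  | cons p S hp ih =>
    rw [Finset.prod_cons]
    have hpp : p.Prime := hS p (Finset.mem_cons_self p S)
    have hS' : ∀ q ∈ S, q.Prime := fun q hq => hS q (Finset.mem_cons_of_mem hq)
    have hcop : Nat.Coprime p (∏ q ∈ S, q) := by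
      rw [hpp.coprime_iff_not_dvd]
      intro hdvd
      obtain ⟨q, hq, hpq⟩ := (Nat.Prime.prime hpp).dvd_finset_prod_iff _ |>.mp hdvd
      exact hp (((Nat.prime_dvd_prime_iff_eq hpp (hS' q hq)).mp hpq) ▸ hq)
    exact (Nat.squarefree_mul hcop).mpr ⟨hpp.squarefree, ih hS'⟩

-- binomial identity: sum over powerset
lemma sum_powerset_pow {s : Finset ℕ} (J : ℝ) :
    ∑ t ∈ s.powerset, J ^ t.card = (J + 1) ^ s.card := by
  have := Finset.prod_add (fun _ : ℕ => J) (fun _ : ℕ => (1:ℝ)) s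
  simp only [Finset.prod_const, Finset.prod_const_one, one_pow, mul_one] at this
  rw [← this]

-- sum of log p over prime divisors of m is ≤ log m
lemma sum_log_primeFactors_le {m : ℕ} (hm : 1 ≤ m) :
    ∑ d ∈ m.divisors, (if d.Prime then Real.log d else 0) ≤ Real.log m := by
  rw [← Finset.sum_filter]
  have hset : m.divisors.filter Nat.Prime = m.primeFactors := by
    ext p
    simp only [Finset.mem_filter, Nat.mem_divisors, Nat.mem_primeFactors]
    tauto
  rw [hset, ← Real.log_prod (s := m.primeFactors) (f := fun p => (p:ℝ)) (fun p hp => by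
    exact_mod_cast (Nat.prime_of_mem_primeFactors hp).ne_zero)]
  rw [← Nat.cast_prod]
  apply Real.log_le_log
    (by exact_mod_cast Finset.prod_pos fun p hp => (Nat.prime_of_mem_primeFactors hp).pos)
  exact_mod_cast Nat.le_of_dvd hm (Nat.prod_primeFactors_dvd m)

-- Chebyshev: theta(N) ≤ N log 4
lemma theta_le (N : ℕ) : ∑ p ∈ (N+1).primesBelow, Real.log p ≤ N * Real.log 4 := by
  have h0 : ∀ p ∈ (N+1).primesBelow, (0:ℝ) < p := fun p hp => by
    exact_mod_cast (Nat.prime_of_mem_primesBelow hp).pos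
  rw [← Real.log_prod (s := (N+1).primesBelow) (f := fun p => (p:ℝ)) (fun p hp => (h0 p hp).ne')]
  rw [← Nat.cast_prod]
  have : ∏ p ∈ (N+1).primesBelow, p = primorial N := by
    rw [primorial, Nat.primesBelow]
  rw [this]
  calc Real.log (primorial N) ≤ Real.log ((4:ℕ)^N) := by
        apply Real.log_le_log (by exact_mod_cast primorial_pos N)
        exact_mod_cast primorial_le_4_pow N
    _ = N * Real.log 4 := by
        push_cast
        rw [Real.log_pow]

lemma primesBelow_eq_filter (N : ℕ) :
    (N+1).primesBelow = (Icc 1 N).filter Nat.Prime := by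
  ext p
  simp only [Nat.mem_primesBelow, Finset.mem_filter, Finset.mem_Icc, Nat.lt_succ_iff]
  exact ⟨fun ⟨h1, h2⟩ => ⟨⟨h2.one_lt.le.trans' (by norm_num), h1⟩, h2⟩,
    fun ⟨⟨_, h1⟩, h2⟩ => ⟨h1, h2⟩⟩

-- Mertens' first theorem (upper bound)
lemma mertens_first {N : ℕ} (hN : 1 ≤ N) :
    ∑ p ∈ (N+1).primesBelow, Real.log p / p ≤ Real.log N + Real.log 4 := by
  have hN0 : (0:ℝ) < N := by exact_mod_cast hN
  rw [← mul_le_mul_iff_right₀ hN0]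
  have key : (N:ℝ) * ∑ p ∈ (N+1).primesBelow, Real.log p / p ≤
      ∑ p ∈ (N+1).primesBelow, Real.log p * ((N / p : ℕ) : ℝ) +
        ∑ p ∈ (N+1).primesBelow, Real.log p := by
    rw [Finset.mul_sum, ← Finset.sum_add_distrib]
    apply Finset.sum_le_sum
    intro p hp
    have hpp := Nat.prime_of_mem_primesBelow hp
    have hp0 : (0:ℝ) < p := by exact_mod_cast hpp.pos
    have hlog : (0:ℝ) ≤ Real.log p := Real.log_natCast_nonneg p
    have hnat : N < (N / p + 1) * p := by
      have h1 := Nat.div_add_mod N p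
      have h2 : N % p < p := Nat.mod_lt N hpp.pos
      calc N = p * (N / p) + N % p := (Nat.div_add_mod N p).symm
        _ < p * (N / p) + p := by omega
        _ = (N / p + 1) * p := by ring
    have hdiv : (N:ℝ) / p ≤ ((N / p : ℕ) : ℝ) + 1 := by
      rw [div_le_iff₀ hp0]
      exact_mod_cast le_of_lt (by exact_mod_cast hnat)
    calc (N:ℝ) * (Real.log p / p) = Real.log p * ((N:ℝ) / p) := by ring
      _ ≤ Real.log p * (((N / p : ℕ) : ℝ) + 1) := mul_le_mul_of_nonneg_left hdiv hlog
      _ = Real.log p * ((N / p : ℕ) : ℝ) + Real.log p := by ring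
  have swap2 : ∑ p ∈ (N+1).primesBelow, Real.log p * ((N / p : ℕ) : ℝ) =
      ∑ d ∈ Icc 1 N, (if d.Prime then Real.log d else 0) * ((N / d : ℕ) : ℝ) := by
    rw [primesBelow_eq_filter, Finset.sum_filter]
    exact Finset.sum_congr rfl fun d _ => by rw [ite_mul, zero_mul]
  have sumlog : ∑ m ∈ Icc 1 N, Real.log m ≤ (N:ℝ) * Real.log N := by
    calc ∑ m ∈ Icc 1 N, Real.log m ≤ ∑ _m ∈ Icc 1 N, Real.log N := by
          apply Finset.sum_le_sum
          intro m hm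
          have := (Finset.mem_Icc.mp hm).2
          exact Real.log_le_log (by exact_mod_cast (Finset.mem_Icc.mp hm).1) (by exact_mod_cast this)
      _ = (N:ℝ) * Real.log N := by
          rw [Finset.sum_const, Nat.card_Icc, nsmul_eq_mul]
          norm_num
  have swap3 : ∑ d ∈ Icc 1 N, (if d.Prime then Real.log d else 0) * ((N / d : ℕ) : ℝ) ≤
      (N:ℝ) * Real.log N := by
    rw [← swap_div]
    refine le_trans (Finset.sum_le_sum fun m hm => sum_log_primeFactors_le (Finset.mem_Icc.mp hm).1) sumlog
  calc (N:ℝ) * ∑ p ∈ (N+1).primesBelow, Real.log p / p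
      ≤ ∑ p ∈ (N+1).primesBelow, Real.log p * ((N / p : ℕ) : ℝ) +
        ∑ p ∈ (N+1).primesBelow, Real.log p := key
    _ ≤ (N:ℝ) * Real.log N + (N:ℝ) * Real.log 4 := by
        apply add_le_add _ (theta_le N)
        rw [swap2]
        exact swap3
    _ = (N:ℝ) * (Real.log N + Real.log 4) := by ring



noncomputable def Bsum (j : ℕ) : ℝ := ∑ p ∈ ((2^(j+1) : ℕ)).primesBelow, Real.log p / p
noncomputable def Tsum (j : ℕ) : ℝ := ∑ p ∈ ((2^(j+1) : ℕ)).primesBelow, 1 / (p:ℝ)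

lemma pb_subset {a b : ℕ} (h : a ≤ b) : a.primesBelow ⊆ b.primesBelow :=
  Finset.filter_subset_filter _ (Finset.range_subset_range.mpr h)

lemma Bsum_nonneg (j : ℕ) : 0 ≤ Bsum j := by
  apply Finset.sum_nonneg
  intro p hp
  have := Nat.prime_of_mem_primesBelow hp
  positivity

lemma Bsum_bound (j : ℕ) : Bsum j ≤ ((j:ℝ) + 3) * Real.log 2 := by
  have h2 : (1:ℕ) ≤ 2^(j+1) - 1 := by
    have : 2 ≤ 2^(j+1) := Nat.one_lt_two_pow_iff.mpr (by omega)
    omega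
  have hNe : 2^(j+1) - 1 + 1 = 2^(j+1) := by
    have : 2 ≤ 2^(j+1) := Nat.one_lt_two_pow_iff.mpr (by omega)
    omega
  have := mertens_first h2
  rw [hNe] at this
  refine le_trans this ?_
  have h4 : Real.log 4 = 2 * Real.log 2 := by
    rw [show (4:ℝ) = 2^2 by norm_num, Real.log_pow]
    norm_num
  have hlogN : Real.log ((2^(j+1) - 1 : ℕ) : ℝ) ≤ ((j:ℝ)+1) * Real.log 2 := by
    calc Real.log ((2^(j+1) - 1 : ℕ) : ℝ) ≤ Real.log ((2^(j+1) : ℕ) : ℝ) := by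
          apply Real.log_le_log (by exact_mod_cast h2)
          exact_mod_cast Nat.sub_le _ _
      _ = ((j:ℝ)+1) * Real.log 2 := by
          push_cast
          rw [Real.log_pow]
          push_cast
          ring
  rw [h4]
  linarith

lemma Bsum_zero : Bsum 0 = 0 := by
  have h : ((2^(0+1) : ℕ)).primesBelow = ∅ := by
    ext p
    simp only [Nat.mem_primesBelow, Finset.notMem_empty, iff_false, not_and, pow_one]
    intro hp hpp
    have := hpp.two_le
    omega
  rw [Bsum, h, Finset.sum_empty]

lemma Tsum_zero : Tsum 0 = 0 := by
  have h : ((2^(0+1) : ℕ)).primesBelow = ∅ := by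
    ext p
    simp only [Nat.mem_primesBelow, Finset.notMem_empty, iff_false, not_and, pow_one]
    intro hp hpp
    have := hpp.two_le
    omega
  rw [Tsum, h, Finset.sum_empty]

lemma Tsum_succ (J : ℕ) :
    Tsum (J+1) = Tsum J + ∑ p ∈ ((2^(J+2) : ℕ)).primesBelow \ ((2^(J+1) : ℕ)).primesBelow, 1/(p:ℝ) := by
  rw [Tsum, Tsum, Finset.sum_sdiff_eq_sub (pb_subset (Nat.pow_le_pow_right (by norm_num) (by omega)))]
  ring

lemma block_bound (J : ℕ) :
    ∑ p ∈ ((2^(J+2) : ℕ)).primesBelow \ ((2^(J+1) : ℕ)).primesBelow, 1/(p:ℝ) ≤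
      (Bsum (J+1) - Bsum J) / (((J:ℝ)+1) * Real.log 2) := by
  have hL : (0:ℝ) < Real.log 2 := Real.log_pos one_lt_two
  have hJL : (0:ℝ) < ((J:ℝ)+1) * Real.log 2 := by positivity
  have step1 : ∑ p ∈ ((2^(J+2) : ℕ)).primesBelow \ ((2^(J+1) : ℕ)).primesBelow, 1/(p:ℝ) ≤
      ∑ p ∈ ((2^(J+2) : ℕ)).primesBelow \ ((2^(J+1) : ℕ)).primesBelow,
        (Real.log p / p) / (((J:ℝ)+1) * Real.log 2) := by
    apply Finset.sum_le_sum
    intro p hp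
    rw [Finset.mem_sdiff] at hp
    have hpp := Nat.prime_of_mem_primesBelow hp.1
    have hp0 : (0:ℝ) < p := by exact_mod_cast hpp.pos
    have hplb : (2:ℕ)^(J+1) ≤ p := by
      by_contra hcon
      exact hp.2 (Nat.mem_primesBelow.mpr ⟨by omega, hpp⟩)
    have hlogp : ((J:ℝ)+1) * Real.log 2 ≤ Real.log p := by
      calc ((J:ℝ)+1) * Real.log 2 = Real.log (((2:ℕ)^(J+1) : ℕ) : ℝ) := by
            push_cast
            rw [Real.log_pow]
            push_cast
            ring
        _ ≤ Real.log p := Real.log_le_log (by positivity) (by exact_mod_cast hplb)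
    rw [div_div, le_div_iff₀ (by positivity)]
    calc 1/(p:ℝ) * ((p:ℝ) * (((J:ℝ)+1) * Real.log 2)) = ((J:ℝ)+1) * Real.log 2 := by
          field_simp
      _ ≤ Real.log p := hlogp
  refine le_trans step1 ?_
  rw [← Finset.sum_div, Finset.sum_sdiff_eq_sub (pb_subset (Nat.pow_le_pow_right (by norm_num) (by omega)))]
  rfl
  

lemma abel_bound (J : ℕ) : Tsum J ≤ Bsum J / ((J:ℝ) * Real.log 2) +
    ∑ j ∈ Ico 1 J, Bsum j / ((j:ℝ)*((j:ℝ)+1)*Real.log 2) := by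
  have hL : (0:ℝ) < Real.log 2 := Real.log_pos one_lt_two
  induction J with
  | zero => simp [Tsum_zero, Bsum_zero]
  | succ J ih =>
    have hstep := le_trans (le_of_eq (Tsum_succ J)) (add_le_add ih (block_bound J))
    rcases Nat.eq_zero_or_pos J with hJ0 | hJ1
    · subst hJ0
      simp only [Bsum_zero, Tsum_zero] at hstep ⊢
      norm_num at hstep ⊢
      exact le_trans hstep (le_refl _)
    · rw [Finset.sum_Ico_succ_top hJ1]
      have hJR : (1:ℝ) ≤ (J:ℝ) := by exact_mod_cast hJ1
      have halg : Bsum J / ((J:ℝ) * Real.log 2) + (Bsum (J+1) - Bsum J) / (((J:ℝ)+1) * Real.log 2)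
          ≤ Bsum (J+1) / (((J:ℝ)+1) * Real.log 2) + Bsum J / ((J:ℝ)*((J:ℝ)+1)*Real.log 2) := by
        have hsplit : Bsum J / ((J:ℝ) * Real.log 2) =
            Bsum J / (((J:ℝ)+1) * Real.log 2) + Bsum J / ((J:ℝ)*((J:ℝ)+1)*Real.log 2) := by
          field_simp
        have e1 := sub_div (Bsum (J+1)) (Bsum J) (((J:ℝ)+1) * Real.log 2)
        linarith [hsplit, e1]
      push_cast
      push_cast at hstep halg
      linarith

lemma harmonic_Ico (J : ℕ) : ∑ j ∈ Ico 1 J, 1/(j:ℝ) ≤ 1 + Real.log J := by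
  calc ∑ j ∈ Ico 1 J, 1/(j:ℝ) ≤ ∑ j ∈ Icc 1 J, 1/(j:ℝ) := by
        apply Finset.sum_le_sum_of_subset_of_nonneg
        · intro j hj
          rw [Finset.mem_Ico] at hj
          exact Finset.mem_Icc.mpr ⟨hj.1, by omega⟩
        · intro j _ _
          positivity
    _ = (harmonic J : ℝ) := by
        rw [harmonic_eq_sum_Icc]
        push_cast
        simp [one_div]
    _ ≤ 1 + Real.log J := harmonic_le_one_add_log J

lemma telescope_Ico (J : ℕ) (hJ : 1 ≤ J) : ∑ j ∈ Ico 1 J, (1/(j:ℝ) - 1/((j:ℝ)+1)) ≤ 1 := by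
  rw [Finset.sum_Ico_eq_sum_range]
  have key : ∑ i ∈ Finset.range (J-1), ((fun m => 1/((1+m : ℕ):ℝ)) i - (fun m => 1/((1+m : ℕ):ℝ)) (i+1))
      = 1/((1:ℕ):ℝ) - 1/(((1+(J-1)) : ℕ):ℝ) := by
    have := Finset.sum_range_sub' (fun m => 1/((1+m : ℕ):ℝ)) (J-1)
    simpa using this
  have hcast : ∀ i, 1/((1+i:ℕ):ℝ) - 1/((1+(i+1):ℕ):ℝ) = 1/((1+i:ℕ):ℝ) - 1/(((1+i:ℕ):ℝ)+1) := by
    intro i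
    push_cast
    ring_nf
  calc ∑ i ∈ Finset.range (J-1), (1/((1+i:ℕ):ℝ) - 1/(((1+i:ℕ):ℝ)+1))
      = ∑ i ∈ Finset.range (J-1), ((fun m => 1/((1+m : ℕ):ℝ)) i - (fun m => 1/((1+m : ℕ):ℝ)) (i+1)) := by
        refine Finset.sum_congr rfl fun i _ => ?_
        simpa using (hcast i).symm
    _ = 1/((1:ℕ):ℝ) - 1/(((1+(J-1)) : ℕ):ℝ) := key
    _ ≤ 1 := by
        simp only [Nat.cast_one]
        have : (0:ℝ) ≤ 1/(((1+(J-1)) : ℕ):ℝ) := by positivity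
        norm_num
        linarith

lemma mertens_second_dyadic {J : ℕ} (hJ : 1 ≤ J) : Tsum J ≤ Real.log J + 7 := by
  have hL : (0:ℝ) < Real.log 2 := Real.log_pos one_lt_two
  have hJR : (1:ℝ) ≤ (J:ℝ) := by exact_mod_cast hJ
  have h1 : Bsum J / ((J:ℝ) * Real.log 2) ≤ 4 := by
    rw [div_le_iff₀ (by positivity)]
    calc Bsum J ≤ ((J:ℝ)+3) * Real.log 2 := Bsum_bound J
      _ ≤ 4 * ((J:ℝ) * Real.log 2) := by nlinarith
  have h2 : ∑ j ∈ Ico 1 J, Bsum j / ((j:ℝ)*((j:ℝ)+1)*Real.log 2) ≤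
      ∑ j ∈ Ico 1 J, (1/(j:ℝ) + 2 * (1/(j:ℝ) - 1/((j:ℝ)+1))) := by
    apply Finset.sum_le_sum
    intro j hj
    have hj1 : 1 ≤ j := (Finset.mem_Ico.mp hj).1
    have hjR : (1:ℝ) ≤ (j:ℝ) := by exact_mod_cast hj1
    have hden : (0:ℝ) < (j:ℝ)*((j:ℝ)+1)*Real.log 2 := by positivity
    rw [div_le_iff₀ hden]
    calc Bsum j ≤ ((j:ℝ)+3) * Real.log 2 := Bsum_bound j
      _ = (1/(j:ℝ) + 2 * (1/(j:ℝ) - 1/((j:ℝ)+1))) * ((j:ℝ)*((j:ℝ)+1)*Real.log 2) := by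
          field_simp
          ring
  have h3 : ∑ j ∈ Ico 1 J, (1/(j:ℝ) + 2 * (1/(j:ℝ) - 1/((j:ℝ)+1))) ≤ (1 + Real.log J) + 2 * 1 := by
    rw [Finset.sum_add_distrib, ← Finset.mul_sum]
    exact add_le_add (harmonic_Ico J) (by
      have := telescope_Ico J hJ
      nlinarith)
  calc Tsum J ≤ Bsum J / ((J:ℝ) * Real.log 2) +
      ∑ j ∈ Ico 1 J, Bsum j / ((j:ℝ)*((j:ℝ)+1)*Real.log 2) := abel_bound J
    _ ≤ 4 + ((1 + Real.log J) + 2 * 1) := add_le_add h1 (le_trans h2 h3)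
    _ = Real.log J + 7 := by ring

lemma mertens_second {x : ℝ} (hx : 2 ≤ x) :
    ∑ p ∈ (⌊x⌋₊+1).primesBelow, 1/(p:ℝ) ≤ Real.log (Real.log x) + 8 := by
  have hx0 : (0:ℝ) < x := by linarith
  have hlogx : (0:ℝ) < Real.log x := Real.log_pos (by linarith)
  have hlogb1 : (1:ℝ) ≤ Real.logb 2 x := by
    have h22 : Real.logb 2 2 = 1 := Real.logb_self_eq_one (by norm_num)
    rw [← h22]
    exact Real.logb_le_logb_of_le (by norm_num) (by norm_num) hx
  set J := ⌊Real.logb 2 x⌋₊ with hJdef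
  have hJ1 : 1 ≤ J := Nat.le_floor (by exact_mod_cast hlogb1)
  have hJR1 : (1:ℝ) ≤ (J:ℝ) := by exact_mod_cast hJ1
  have hxlt : x < ((2^(J+1) : ℕ) : ℝ) := by
    have h1 : Real.logb 2 x < (J:ℝ) + 1 := Nat.lt_floor_add_one _
    have h2 : x = (2:ℝ) ^ (Real.logb 2 x) := (Real.rpow_logb (by norm_num) (by norm_num) hx0).symm
    have h3 : (2:ℝ) ^ (Real.logb 2 x) < (2:ℝ) ^ ((J:ℝ)+1) :=
      Real.rpow_lt_rpow_left_iff (by norm_num) |>.mpr h1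
    have h4 : (2:ℝ) ^ ((J:ℝ)+1) = ((2^(J+1) : ℕ) : ℝ) := by
      rw [show ((J:ℝ)+1) = ((J+1 : ℕ):ℝ) by push_cast; ring, Real.rpow_natCast]
      push_cast
      ring
    rw [h2, ← h4]
    exact h3
  have hsubset : (⌊x⌋₊+1).primesBelow ⊆ ((2^(J+1)):ℕ).primesBelow := by
    apply pb_subset
    have : ⌊x⌋₊ < 2^(J+1) := by
      rw [Nat.floor_lt hx0.le]
      exact hxlt
    omega
  have hmono : ∑ p ∈ (⌊x⌋₊+1).primesBelow, 1/(p:ℝ) ≤ Tsum J := by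
    apply Finset.sum_le_sum_of_subset_of_nonneg hsubset
    intro p hp _
    positivity
  have hlogJ : Real.log J ≤ Real.log (Real.log x) + 1 := by
    have hJle : (J:ℝ) ≤ Real.logb 2 x := Nat.floor_le (by linarith)
    have hlb : Real.logb 2 x ≤ 2 * Real.log x := by
      rw [Real.logb, div_le_iff₀ (Real.log_pos (by norm_num))]
      nlinarith [Real.log_two_gt_d9, hlogx]
    calc Real.log J ≤ Real.log (2 * Real.log x) := by
          apply Real.log_le_log (by linarith)
          linarith
      _ = Real.log 2 + Real.log (Real.log x) := Real.log_mul (by norm_num) hlogx.ne'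
      _ ≤ Real.log (Real.log x) + 1 := by
          have := Real.log_two_lt_d9
          linarith
  calc ∑ p ∈ (⌊x⌋₊+1).primesBelow, 1/(p:ℝ) ≤ Tsum J := hmono
    _ ≤ Real.log J + 7 := mertens_second_dyadic hJ1
    _ ≤ Real.log (Real.log x) + 8 := by linarith



-- squarefree divisor identity
lemma pow_omega_eq_sum {K : ℝ} {m : ℕ} (hm : 1 ≤ m) :
    ∑ d ∈ m.divisors.filter Squarefree, (K-1) ^ d.primeFactors.card
      = K ^ m.primeFactors.card := by
  have hm0 : m ≠ 0 := by omega
  have hps := sum_powerset_pow (s := m.primeFactors) (K-1)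
  rw [show K - 1 + 1 = K by ring] at hps
  rw [← hps]
  symm
  apply Finset.sum_nbij' (i := fun S => ∏ p ∈ S, p) (j := fun d => d.primeFactors)
  · intro S hS
    rw [Finset.mem_powerset] at hS
    have hpr : ∀ p ∈ S, p.Prime := fun p hp => Nat.prime_of_mem_primeFactors (hS hp)
    refine Finset.mem_filter.mpr ⟨Nat.mem_divisors.mpr ⟨?_, hm0⟩, squarefree_prod_primes hpr⟩
    exact dvd_trans (Finset.prod_dvd_prod_of_subset _ _ _ hS) (Nat.prod_primeFactors_dvd m)
  · intro d hd
    rw [Finset.mem_filter, Nat.mem_divisors] at hd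
    exact Finset.mem_powerset.mpr (Nat.primeFactors_mono hd.1.1 hm0)
  · intro S hS
    rw [Finset.mem_powerset] at hS
    exact Nat.primeFactors_prod (fun p hp => Nat.prime_of_mem_primeFactors (hS hp))
  · intro d hd
    rw [Finset.mem_filter] at hd
    exact Nat.prod_primeFactors_of_squarefree hd.2
  · intro S hS
    rw [Finset.mem_powerset] at hS
    rw [Nat.primeFactors_prod (fun p hp => Nat.prime_of_mem_primeFactors (hS hp))]

lemma sumK_bound {K : ℝ} (hK : 1 < K) {x : ℝ} (hx : 2 ≤ x) {N : ℕ} (hN : N ≤ ⌊x⌋₊) :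
    ∑ m ∈ Icc 1 N, K ^ m.primeFactors.card ≤
      Real.exp (8*(K-1)) * N * (Real.log x) ^ (K-1) := by
  have hJ : (0:ℝ) < K - 1 := by linarith
  have hlogx : (0:ℝ) < Real.log x := Real.log_pos (by linarith)
  set g : ℕ → ℝ := fun d => if Squarefree d then (K-1) ^ d.primeFactors.card else 0 with hg
  have hgnonneg : ∀ d, 0 ≤ g d := by
    intro d
    rw [hg]
    dsimp only
    split
    · positivity
    · exact le_refl 0
  have step1 : ∑ m ∈ Icc 1 N, K ^ m.primeFactors.card = ∑ m ∈ Icc 1 N, ∑ d ∈ m.divisors, g d := by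
    refine Finset.sum_congr rfl fun m hm => ?_
    rw [hg, ← Finset.sum_filter]
    exact (pow_omega_eq_sum (Finset.mem_Icc.mp hm).1).symm
  rw [step1, swap_div]
  have step2 : ∑ d ∈ Icc 1 N, g d * ((N / d : ℕ) : ℝ) ≤ (N:ℝ) * ∑ d ∈ Icc 1 N, g d / d := by
    rw [Finset.mul_sum]
    apply Finset.sum_le_sum
    intro d hd
    have hd1 : 1 ≤ d := (Finset.mem_Icc.mp hd).1
    have hd0 : (0:ℝ) < d := by exact_mod_cast hd1
    calc g d * ((N / d : ℕ) : ℝ) ≤ g d * ((N:ℝ) / d) :=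
          mul_le_mul_of_nonneg_left Nat.cast_div_le (hgnonneg d)
      _ = (N:ℝ) * (g d / d) := by ring
  refine le_trans step2 ?_
  -- now bound the Dirichlet-type sum by the Euler product
  have step3 : ∑ d ∈ Icc 1 N, g d / d ≤
      ∏ p ∈ (⌊x⌋₊+1).primesBelow, (1 + (K-1)/p) := by
    have hexp : ∏ p ∈ (⌊x⌋₊+1).primesBelow, (1 + (K-1)/p) =
        ∑ S ∈ (⌊x⌋₊+1).primesBelow.powerset, (K-1)^S.card / ((∏ p ∈ S, p : ℕ) : ℝ) := by
      have := Finset.prod_add (fun p : ℕ => (K-1)/(p:ℝ)) (fun _ : ℕ => (1:ℝ))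
        ((⌊x⌋₊+1).primesBelow)
      simp only [Finset.prod_const_one, mul_one] at this
      calc ∏ p ∈ (⌊x⌋₊+1).primesBelow, (1 + (K-1)/(p:ℝ))
          = ∏ p ∈ (⌊x⌋₊+1).primesBelow, ((K-1)/(p:ℝ) + 1) := by
            refine Finset.prod_congr rfl fun p _ => by ring
        _ = ∑ S ∈ (⌊x⌋₊+1).primesBelow.powerset, ∏ p ∈ S, ((K-1)/(p:ℝ)) := this
        _ = ∑ S ∈ (⌊x⌋₊+1).primesBelow.powerset, (K-1)^S.card / ((∏ p ∈ S, p : ℕ) : ℝ) := by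
            refine Finset.sum_congr rfl fun S _ => ?_
            rw [Finset.prod_div_distrib, Finset.prod_const, Nat.cast_prod]
    have hfilter : ∑ d ∈ Icc 1 N, g d / d =
        ∑ d ∈ (Icc 1 N).filter Squarefree, (K-1)^d.primeFactors.card / (d:ℝ) := by
      rw [Finset.sum_filter]
      refine Finset.sum_congr rfl fun d _ => ?_
      rw [hg]
      dsimp only
      split
      · rfl
      · rw [zero_div]
    have hinj : ∀ d ∈ (Icc 1 N).filter Squarefree, ∀ d' ∈ (Icc 1 N).filter Squarefree,
        d.primeFactors = d'.primeFactors → d = d' := by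
      intro d hd d' hd' heq
      rw [Finset.mem_filter] at hd hd'
      rw [← Nat.prod_primeFactors_of_squarefree hd.2, ← Nat.prod_primeFactors_of_squarefree hd'.2,
        heq]
    have himg : ∑ d ∈ (Icc 1 N).filter Squarefree, (K-1)^d.primeFactors.card / (d:ℝ) =
        ∑ S ∈ ((Icc 1 N).filter Squarefree).image (fun d => d.primeFactors),
          (K-1)^S.card / ((∏ p ∈ S, p : ℕ) : ℝ) := by
      rw [Finset.sum_image hinj]
      refine Finset.sum_congr rfl fun d hd => ?_
      rw [Finset.mem_filter] at hd
      rw [Nat.prod_primeFactors_of_squarefree hd.2]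
    have hsub : ((Icc 1 N).filter Squarefree).image (fun d => d.primeFactors) ⊆
        (⌊x⌋₊+1).primesBelow.powerset := by
      intro S hS
      rw [Finset.mem_image] at hS
      obtain ⟨d, hd, rfl⟩ := hS
      rw [Finset.mem_filter, Finset.mem_Icc] at hd
      rw [Finset.mem_powerset]
      intro p hp
      have hpp := Nat.prime_of_mem_primeFactors hp
      have hpd : p ∣ d := Nat.dvd_of_mem_primeFactors hp
      have : p ≤ d := Nat.le_of_dvd (by omega) hpd
      exact Nat.mem_primesBelow.mpr ⟨by omega, hpp⟩
    rw [hfilter, himg, hexp]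
    apply Finset.sum_le_sum_of_subset_of_nonneg hsub
    intro S hS _
    have hpos : (0:ℝ) < ((∏ p ∈ S, p : ℕ) : ℝ) := by
      rw [Finset.mem_powerset] at hS
      have : ∀ p ∈ S, 0 < p := fun p hp =>
        (Nat.prime_of_mem_primesBelow (hS hp)).pos
      exact_mod_cast Finset.prod_pos this
    positivity
  have step4 : ∏ p ∈ (⌊x⌋₊+1).primesBelow, (1 + (K-1)/(p:ℝ)) ≤
      Real.exp (8*(K-1)) * (Real.log x) ^ (K-1) := by
    have h1 : ∏ p ∈ (⌊x⌋₊+1).primesBelow, (1 + (K-1)/(p:ℝ)) ≤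
        ∏ p ∈ (⌊x⌋₊+1).primesBelow, Real.exp ((K-1)/(p:ℝ)) := by
      apply Finset.prod_le_prod
      · intro p hp
        have : (0:ℝ) < p := by exact_mod_cast (Nat.prime_of_mem_primesBelow hp).pos
        positivity
      · intro p hp
        have h := Real.add_one_le_exp ((K-1)/(p:ℝ))
        linarith
    rw [← Real.exp_sum] at h1
    refine le_trans h1 ?_
    have h2 : ∑ p ∈ (⌊x⌋₊+1).primesBelow, (K-1)/(p:ℝ) ≤ (K-1) * (Real.log (Real.log x) + 8) := by
      have := mertens_second hx
      calc ∑ p ∈ (⌊x⌋₊+1).primesBelow, (K-1)/(p:ℝ)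
          = (K-1) * ∑ p ∈ (⌊x⌋₊+1).primesBelow, 1/(p:ℝ) := by
            rw [Finset.mul_sum]
            refine Finset.sum_congr rfl fun p _ => by ring
        _ ≤ (K-1) * (Real.log (Real.log x) + 8) := by
            apply mul_le_mul_of_nonneg_left this (by linarith)
    calc Real.exp (∑ p ∈ (⌊x⌋₊+1).primesBelow, (K-1)/(p:ℝ))
        ≤ Real.exp ((K-1) * (Real.log (Real.log x) + 8)) := Real.exp_le_exp.mpr h2
      _ = Real.exp (8*(K-1)) * (Real.log x) ^ (K-1) := by
          rw [Real.rpow_def_of_pos hlogx]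
          rw [← Real.exp_add]
          ring_nf
  calc (N:ℝ) * ∑ d ∈ Icc 1 N, g d / d
      ≤ (N:ℝ) * (Real.exp (8*(K-1)) * (Real.log x) ^ (K-1)) := by
        apply mul_le_mul_of_nonneg_left (le_trans step3 step4) (Nat.cast_nonneg N)
    _ = Real.exp (8*(K-1)) * N * (Real.log x) ^ (K-1) := by ring



theorem stmt14 (K : ℝ) (hK : 1 < K) : ∃ C : ℝ, 0 < C ∧ ∀ k : ℕ, 0 < k → ∀ x : ℝ, 2 ≤ x →
    ∑ n ∈ Finset.Icc 1 ⌊x⌋₊, K ^ n.primeFactors.card * (Nat.gcd n k : ℝ) ^ ((1 : ℝ) / 2) ≤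
      C * x * Real.log x ^ (K - 1) *
        ∑ h ∈ k.divisors, (h : ℝ) ^ (-(1 : ℝ) / 2) * K ^ h.primeFactors.card := by
  refine ⟨Real.exp (8*(K-1)), Real.exp_pos _, ?_⟩
  intro k hk x hx
  have hK0 : (0:ℝ) < K := by linarith
  have hlogx : (0:ℝ) < Real.log x := Real.log_pos (by linarith)
  have hx0 : (0:ℝ) < x := by linarith
  set X := ⌊x⌋₊ with hX
  -- fiberwise decomposition by the value of gcd
  rw [← Finset.sum_fiberwise_of_maps_to (g := fun n => Nat.gcd n k) (t := k.divisors)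
    (fun n _ => Nat.mem_divisors.mpr ⟨Nat.gcd_dvd_right n k, hk.ne'⟩)]
  rw [Finset.mul_sum]
  apply Finset.sum_le_sum
  intro h hh
  obtain ⟨hdvd, -⟩ := Nat.mem_divisors.mp hh
  have hh1 : 1 ≤ h := Nat.pos_of_dvd_of_pos hdvd hk
  have hh0 : (0:ℝ) < h := by exact_mod_cast hh1
  -- rewrite gcd = h inside the fiber
  have hfib : ∑ n ∈ (Icc 1 X).filter (fun n => Nat.gcd n k = h),
      K ^ n.primeFactors.card * (Nat.gcd n k : ℝ) ^ ((1 : ℝ) / 2)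
      = (h:ℝ) ^ ((1 : ℝ) / 2) * ∑ n ∈ (Icc 1 X).filter (fun n => Nat.gcd n k = h),
          K ^ n.primeFactors.card := by
    rw [Finset.mul_sum]
    refine Finset.sum_congr rfl fun n hn => ?_
    rw [(Finset.mem_filter.mp hn).2]
    ring
  rw [hfib]
  -- bound the fiber sum
  have hsub : (Icc 1 X).filter (fun n => Nat.gcd n k = h) ⊆
      (Icc 1 (X/h)).image (fun m => h * m) := by
    intro n hn
    rw [Finset.mem_filter, Finset.mem_Icc] at hn
    obtain ⟨⟨hn1, hnX⟩, hgcd⟩ := hn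
    have hdn : h ∣ n := hgcd ▸ Nat.gcd_dvd_left n k
    rw [Finset.mem_image]
    refine ⟨n / h, Finset.mem_Icc.mpr ⟨?_, Nat.div_le_div_right hnX⟩, Nat.mul_div_cancel' hdn⟩
    rw [Nat.le_div_iff_mul_le hh1]
    simpa using Nat.le_of_dvd (by omega) hdn
  have hfield : ∑ n ∈ (Icc 1 X).filter (fun n => Nat.gcd n k = h), K ^ n.primeFactors.card ≤
      K ^ h.primeFactors.card * ∑ m ∈ Icc 1 (X/h), K ^ m.primeFactors.card := by
    calc ∑ n ∈ (Icc 1 X).filter (fun n => Nat.gcd n k = h), K ^ n.primeFactors.card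
        ≤ ∑ n ∈ (Icc 1 (X/h)).image (fun m => h * m), K ^ n.primeFactors.card := by
          apply Finset.sum_le_sum_of_subset_of_nonneg hsub
          intro n _ _
          positivity
      _ = ∑ m ∈ Icc 1 (X/h), K ^ (h * m).primeFactors.card := by
          apply Finset.sum_image
          intro a _ b _ hab
          exact Nat.eq_of_mul_eq_mul_left hh1 hab
      _ ≤ ∑ m ∈ Icc 1 (X/h), K ^ h.primeFactors.card * K ^ m.primeFactors.card := by
          apply Finset.sum_le_sum
          intro m hm
          have hm1 : 1 ≤ m := (Finset.mem_Icc.mp hm).1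
          have hcard : (h * m).primeFactors.card ≤
              h.primeFactors.card + m.primeFactors.card := by
            rw [Nat.primeFactors_mul (by omega) (by omega)]
            exact Finset.card_union_le _ _
          rw [← pow_add]
          exact pow_le_pow_right₀ hK.le hcard
      _ = K ^ h.primeFactors.card * ∑ m ∈ Icc 1 (X/h), K ^ m.primeFactors.card := by
          rw [Finset.mul_sum]
  have hA : ∑ m ∈ Icc 1 (X/h), K ^ m.primeFactors.card ≤
      Real.exp (8*(K-1)) * ((X/h : ℕ):ℝ) * (Real.log x) ^ (K-1) :=
    sumK_bound hK hx (Nat.div_le_self X h)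
  have hXh : ((X/h : ℕ):ℝ) ≤ x / h := by
    calc ((X/h : ℕ):ℝ) ≤ (X:ℝ) / h := Nat.cast_div_le
      _ ≤ x / h := by
          rw [div_le_div_iff_of_pos_right hh0]
          exact Nat.floor_le hx0.le
  -- put it together
  have hrpow : (h:ℝ) ^ ((1:ℝ)/2) * ((h:ℝ))⁻¹ = (h:ℝ) ^ (-(1:ℝ)/2) := by
    rw [show (-(1:ℝ)/2) = (1:ℝ)/2 + (-1) by ring, Real.rpow_add hh0, Real.rpow_neg_one]
  have hrp_pos : (0:ℝ) < (h:ℝ) ^ ((1:ℝ)/2) := Real.rpow_pos_of_pos hh0 _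
  calc (h:ℝ) ^ ((1:ℝ)/2) * ∑ n ∈ (Icc 1 X).filter (fun n => Nat.gcd n k = h),
          K ^ n.primeFactors.card
      ≤ (h:ℝ) ^ ((1:ℝ)/2) * (K ^ h.primeFactors.card *
          (Real.exp (8*(K-1)) * (x/(h:ℝ)) * (Real.log x) ^ (K-1))) := by
        apply mul_le_mul_of_nonneg_left _ hrp_pos.le
        refine le_trans hfield ?_
        apply mul_le_mul_of_nonneg_left _ (by positivity)
        refine le_trans hA ?_
        have hrpnn : (0:ℝ) ≤ (Real.log x) ^ (K-1) := (Real.rpow_pos_of_pos hlogx _).le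
        apply mul_le_mul_of_nonneg_right _ hrpnn
        exact mul_le_mul_of_nonneg_left hXh (Real.exp_pos _).le
    _ = Real.exp (8*(K-1)) * x * Real.log x ^ (K-1) *
          ((h:ℝ) ^ (-(1:ℝ)/2) * K ^ h.primeFactors.card) := by
        rw [← hrpow]
        field_simp
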